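/- Let β ∈ (1,∞), d ≥ 1, c ≥ 1, and let s be the unique negative solution of (1−s)(1−s/β)^{−β} = 2^{−βd}/c. Then the number r = β(1 + 2^{βd/(β−1)} β^{β/(β−1)} c^{1/(β−1)}) / (β + 2^{βd/(β−1)} β^{β/(β−1)} c^{1/(β−1)}) satisfies β(1−s)/(β−s) < r < β; equivalently, s > −2^{βd/(β−1)+1} β^{β/(β−1)} c^{1/(β−1)}. -/

import Mathlib

noncomputable section

open Real

theorem r_in_admissible_range (β : ℝ) (hβ : 1 < β) (d : ℕ) (hd : 1 ≤ d) (c : ℝ) (hc : 1 ≤ c)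
    (s : ℝ) (hs : s < 0) (hseq : (1 - s) * (1 - s / β) ^ (-β) = 2 ^ (-(β * d)) / c)
    (r : ℝ)
    (hr : r = β * (1 + 2 ^ (β * d / (β - 1)) * β ^ (β / (β - 1)) * c ^ (1 / (β - 1))) /
          (β + 2 ^ (β * d / (β - 1)) * β ^ (β / (β - 1)) * c ^ (1 / (β - 1)))) :
    (β * (1 - s) / (β - s) < r ∧ r < β) ∧
      s > -2 ^ (β * d / (β - 1) + 1) * β ^ (β / (β - 1)) * c ^ (1 / (β - 1)) := by
  have hβ0 : (0:ℝ) < β := by linarith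
  have hc0 : (0:ℝ) < c := by linarith
  have hb1 : (0:ℝ) < β - 1 := by linarith
  set K : ℝ := 2 ^ (β * d / (β - 1)) * β ^ (β / (β - 1)) * c ^ (1 / (β - 1)) with hKdef
  have hK0 : 0 < K := by positivity
  -- K ^ (β - 1) = 2 ^ (β*d) * β ^ β * c
  have hKpow : K ^ (β - 1) = 2 ^ (β * d) * β ^ β * c := by
    rw [hKdef, Real.mul_rpow (by positivity) (by positivity),
      Real.mul_rpow (by positivity) (by positivity),
      ← Real.rpow_mul (by norm_num), ← Real.rpow_mul hβ0.le,
      ← Real.rpow_mul hc0.le,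
      div_mul_cancel₀ _ hb1.ne', div_mul_cancel₀ _ hb1.ne',
      one_div_mul_cancel hb1.ne', Real.rpow_one]
  -- key step: s > -K
  have hsK : -K < s := by
    by_contra h
    push_neg at h
    set t : ℝ := -s with htdef
    have ht : K ≤ t := by simpa [htdef] using neg_le_neg h
    have ht0 : 0 < t := lt_of_lt_of_le hK0 ht
    have hseq' : (1 + t) * (1 + t / β) ^ (-β) = 2 ^ (-(β * d)) / c := by
      rw [htdef] at *
      have : 1 - s = 1 + -s := by ring
      rw [← this] at *
      convert hseq using 3
      ring
    -- factor 1 + t/β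
    have hfac : 1 + t / β = (t / β) * (1 + β / t) := by
      field_simp
      ring
    have hsplit : (1 + t / β) ^ (-β) = (t / β) ^ (-β) * (1 + β / t) ^ (-β) := by
      rw [hfac, Real.mul_rpow (by positivity) (by positivity)]
    -- Bernoulli: (1 + β/t)^β ≥ 1 + β * (β/t)
    have hbern : 1 + β * (β / t) ≤ (1 + β / t) ^ β :=
      one_add_mul_self_le_rpow_one_add (by have := div_pos hβ0 ht0; linarith) hβ.le
    have hX0 : 0 < (1 + β / t) ^ β := by positivity
    -- (1+t) < t * (1+β/t)^β
    have hD : 1 + t < t * (1 + β / t) ^ β := by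
      have h1 : t * (1 + β * (β / t)) ≤ t * (1 + β / t) ^ β :=
        mul_le_mul_of_nonneg_left hbern ht0.le
      have h2 : t * (1 + β * (β / t)) = t + β ^ 2 := by
        field_simp
      nlinarith
    -- hence (1+t)*(1+β/t)^(-β) < t
    have hE : (1 + t) * (1 + β / t) ^ (-β) < t := by
      rw [Real.rpow_neg (by positivity)]
      rw [mul_inv_lt_iff₀ hX0]
      nlinarith
    -- f(t) < t * (t/β)^(-β)
    have hF : (1 + t) * (1 + t / β) ^ (-β) < t * (t / β) ^ (-β) := by
      rw [hsplit, ← mul_assoc, mul_comm (1 + t) ((t / β) ^ (-β)), mul_assoc, mul_comm t ((t / β) ^ (-β))]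
      have : 0 < (t / β) ^ (-β) := by positivity
      exact (mul_lt_mul_iff_right₀ this).mpr hE
    -- t * (t/β)^(-β) = β^β * t^(1-β)
    have hG : t * (t / β) ^ (-β) = β ^ β * t ^ (1 - β) := by
      rw [Real.div_rpow ht0.le hβ0.le, Real.rpow_neg ht0.le, Real.rpow_neg hβ0.le,
        show (1 : ℝ) - β = 1 + -β by ring, Real.rpow_add ht0, Real.rpow_one,
        Real.rpow_neg ht0.le]
      field_simp
    -- t^(1-β) ≤ K^(1-β)
    have hH : t ^ (1 - β) ≤ K ^ (1 - β) :=
      Real.rpow_le_rpow_of_nonpos hK0 ht (by linarith)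
    -- β^β * K^(1-β) = 2^(-(β*d))/c
    have hI : β ^ β * K ^ (1 - β) = 2 ^ (-(β * d)) / c := by
      have : K ^ ((1:ℝ) - β) = (K ^ (β - 1))⁻¹ := by
        rw [show (1:ℝ) - β = -(β - 1) by ring, Real.rpow_neg hK0.le]
      rw [this, hKpow, Real.rpow_neg (by norm_num : (0:ℝ) ≤ 2)]
      have h2 : (0:ℝ) < (2:ℝ) ^ (β * d) := by positivity
      have hββ : (0:ℝ) < β ^ β := by positivity
      field_simp
    have hchain : (1 + t) * (1 + t / β) ^ (-β) < 2 ^ (-(β * d)) / c := by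
      calc (1 + t) * (1 + t / β) ^ (-β) < t * (t / β) ^ (-β) := hF
        _ = β ^ β * t ^ (1 - β) := hG
        _ ≤ β ^ β * K ^ (1 - β) := by
            apply mul_le_mul_of_nonneg_left hH (by positivity)
        _ = 2 ^ (-(β * d)) / c := hI
    linarith [hseq'.symm.le, hchain]
  have hβs : 0 < β - s := by linarith
  have hβK : 0 < β + K := by linarith
  refine ⟨⟨?_, ?_⟩, ?_⟩
  · rw [hr, div_lt_div_iff₀ hβs hβK]
    nlinarith [mul_pos hb1 (by linarith : (0:ℝ) < K + s)]
  · rw [hr, div_lt_iff₀ hβK]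
    nlinarith
  · have h2K : -2 ^ (β * d / (β - 1) + 1) * β ^ (β / (β - 1)) * c ^ (1 / (β - 1)) = -(2 * K) := by
      rw [Real.rpow_add (by norm_num : (0:ℝ) < 2), Real.rpow_one, hKdef]
      ring
    rw [h2K]
    linarith

end
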